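/- arXiv:2204.09645 — 5 statements merged into one kernel-verified Lean document; each statement's English description precedes it below -/
import Mathlib

section
/- Let X be a continuum and let A, B be nonempty closed subsets of X with A ∩ B = ∅. If B is connected, then there exists a sequence (K_n) of subcontinua of X such that the union of all subcontinua of X meeting B and contained in X \ A equals the union of the K_n. -/
open Set Metric Filter Topology TopologicalSpace

/-- A subcontinuum: a nonempty compact connected subset. -/
def IsSubcontinuum {X : Type*} [TopologicalSpace X] (K : Set X) : Prop :=
  IsCompact K ∧ IsConnected K

/-- `kappa A B` : the union of all subcontinua meeting `B` and avoiding `A`. -/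
def kappa {X : Type*} [TopologicalSpace X] (A B : Set X) : Set X :=
  ⋃₀ {L | IsSubcontinuum L ∧ (L ∩ B).Nonempty ∧ L ⊆ Aᶜ}

/-- A continuum is decomposable if it is the union of two proper subcontinua. -/
def Decomposable (X : Type*) [TopologicalSpace X] : Prop :=
  ∃ M N : Set X, IsSubcontinuum M ∧ IsSubcontinuum N ∧
    M ≠ univ ∧ N ≠ univ ∧ M ∪ N = univ

/-- The property of Kelley. -/
def KelleyProp (X : Type*) [MetricSpace X] : Prop :=
  ∀ (x : ℕ → X) (x₀ : X), Tendsto x atTop (𝓝 x₀) →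
    ∀ A : Set X, IsSubcontinuum A → x₀ ∈ A →
      ∃ B : ℕ → Set X, (∀ n, IsSubcontinuum (B n) ∧ x n ∈ B n) ∧
        Tendsto (fun n => hausdorffDist (B n) A) atTop (𝓝 0)

/-- The hyperspace of nonblockers of `F₁(X)`, as a subset of the hyperspace of
nonempty compact subsets of `X` with the Hausdorff metric. -/
def NB (X : Type*) [MetricSpace X] : Set (NonemptyCompacts X) :=
  {A | ∀ x ∉ (A : Set X), Dense (kappa (A : Set X) ({x} : Set X))}

/-- The minimal nonblocker containing `x` (equal to `X` if `x` lies in no nonblocker). -/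
def piSet (X : Type*) [MetricSpace X] (x : X) : Set X :=
  ⋂ A ∈ {A ∈ NB X | x ∈ (A : Set X)}, (A : Set X)

theorem stmt_0 {X : Type*} [MetricSpace X] [CompactSpace X] [ConnectedSpace X] [Nonempty X]
    (A B : Set X) (hA : IsClosed A) (hAne : A.Nonempty) (hB : IsClosed B) (hBne : B.Nonempty)
    (hAB : A ∩ B = ∅) (hBconn : IsConnected B) :
    ∃ K : ℕ → Set X, (∀ n, IsSubcontinuum (K n)) ∧ kappa A B = ⋃ n, K n := by

  -- `C n` : points at distance at least `1/(n+1)` from `A`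
  set C : ℕ → Set X := fun n => {x | 1 / (n + 1 : ℝ) ≤ infDist x A} with hC
  have hCclosed : ∀ n, IsClosed (C n) := fun n =>
    isClosed_le continuous_const (continuous_infDist_pt A)
  have hCA : ∀ n, C n ⊆ Aᶜ := by
    intro n x hx hxA
    have h0 : infDist x A = 0 := infDist_zero_of_mem hxA
    have : (0:ℝ) < 1 / (n + 1 : ℝ) := by positivity
    simp only [hC, mem_setOf_eq, h0] at hx
    linarith
  have hBA : B ⊆ Aᶜ := by
    intro x hxB hxA
    have : x ∈ A ∩ B := ⟨hxA, hxB⟩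
    rw [hAB] at this; exact this
  obtain ⟨b₀, hb₀⟩ := hBne
  -- the family of subcontinua containing B and inside C n, together with B itself
  set S : ℕ → Set X := fun n =>
    ⋃₀ ({B} ∪ {L | IsSubcontinuum L ∧ B ⊆ L ∧ L ⊆ C n}) with hS
  have hBS : ∀ n, B ⊆ S n := fun n => subset_sUnion_of_mem (Or.inl rfl)
  have hSconn : ∀ n, IsConnected (S n) := by
    intro n
    refine ⟨⟨b₀, (hBS n) hb₀⟩, isPreconnected_sUnion b₀ _ ?_ ?_⟩
    · rintro s (rfl | hs)
      · exact hb₀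
      · exact hs.2.1 hb₀
    · rintro s (rfl | hs)
      · exact hBconn.isPreconnected
      · exact hs.1.2.isPreconnected
  have hSsub : ∀ n, S n ⊆ B ∪ C n := by
    intro n x hx
    obtain ⟨s, hs, hxs⟩ := hx
    rcases hs with rfl | hs
    · exact Or.inl hxs
    · exact Or.inr (hs.2.2 hxs)
  refine ⟨fun n => closure (S n), ?_, ?_⟩
  · intro n
    exact ⟨isClosed_closure.isCompact, (hSconn n).closure⟩
  · apply Subset.antisymm
    · rintro x ⟨L, ⟨hLsub, hLB, hLA⟩, hxL⟩
      -- M = L ∪ B is a subcontinuum containing B avoiding A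
      obtain ⟨y, hyL, hyB⟩ := hLB
      have hMcomp : IsCompact (L ∪ B) := hLsub.1.union (hB.isCompact)
      have hMconn : IsConnected (L ∪ B) := IsConnected.union ⟨y, hyL, hyB⟩ hLsub.2 hBconn
      have hMA : (L ∪ B) ⊆ Aᶜ := union_subset hLA hBA
      -- positive distance from A on compact M
      obtain ⟨z, hzM, hz⟩ := hMcomp.exists_isMinOn ⟨y, Or.inl hyL⟩
        ((continuous_infDist_pt A).continuousOn)
      have hzpos : 0 < infDist z A :=
        (hA.notMem_iff_infDist_pos hAne).mp (hMA hzM)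
      obtain ⟨n, hn⟩ := exists_nat_one_div_lt hzpos
      have hMC : (L ∪ B) ⊆ C n := by
        intro w hw
        have := hz hw
        simp only [hC, mem_setOf_eq]
        calc (1 : ℝ) / (n + 1) ≤ infDist z A := le_of_lt hn
          _ ≤ infDist w A := this
      have : (L ∪ B) ⊆ S n :=
        subset_sUnion_of_mem (Or.inr ⟨⟨hMcomp, hMconn⟩, subset_union_right, hMC⟩)
      exact mem_iUnion.mpr ⟨n, subset_closure (this (Or.inl hxL))⟩
    · intro x hx
      obtain ⟨n, hxn⟩ := mem_iUnion.mp hx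
      refine ⟨closure (S n), ⟨⟨isClosed_closure.isCompact, (hSconn n).closure⟩, ?_, ?_⟩, hxn⟩
      · exact ⟨b₀, subset_closure ((hBS n) hb₀), hb₀⟩
      · have h1 : closure (S n) ⊆ B ∪ C n :=
          closure_minimal (hSsub n) (hB.union (hCclosed n))
        exact h1.trans (union_subset hBA (hCA n))
end

section
/- Let X be a decomposable continuum with the property of Kelley. For every proper subcontinuum L of X, there exists a closed set A ∈ NB(F_1(X)) with A ⊆ X \ L. -/
open Set Metric Filter Topology TopologicalSpace

/- ### Auxiliary lemmas -/

/-- In a compact T2 space, a clopen set can be sandwiched between a connected component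
and any open set containing it. -/
lemma clopen_sandwich {Y : Type*} [TopologicalSpace Y] [CompactSpace Y] [T2Space Y]
    (x : Y) {U : Set Y} (hU : IsOpen U) (h : connectedComponent x ⊆ U) :
    ∃ Z : Set Y, IsClopen Z ∧ x ∈ Z ∧ Z ⊆ U := by
  have hcc := connectedComponent_eq_iInter_isClopen x
  have hdisj : (Uᶜ ∩ ⋂ s : { s : Set Y // IsClopen s ∧ x ∈ s }, (s : Set Y)) = ∅ := by
    rw [← hcc, Set.eq_empty_iff_forall_notMem]
    rintro y ⟨hy1, hy2⟩
    exact hy1 (h hy2)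
  obtain ⟨t, ht⟩ := (hU.isClosed_compl.isCompact).elim_finite_subfamily_closed
    _ (fun s : { s : Set Y // IsClopen s ∧ x ∈ s } => s.2.1.1) hdisj
  refine ⟨⋂ s ∈ t, (s : Set Y), isClopen_biInter_finset (fun s _ => s.2.1), ?_, ?_⟩
  · exact mem_iInter₂.mpr fun s _ => s.2.2
  · intro y hy
    by_contra hyU
    have : y ∈ Uᶜ ∩ ⋂ s ∈ t, (s : Set Y) := ⟨hyU, hy⟩
    rw [ht] at this
    exact this

/-- Boundary bumping: in a continuum, the connected component of a point in a proper
closed set meets the closure of the complement. -/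
lemma bump {X : Type*} [MetricSpace X] [CompactSpace X] [ConnectedSpace X]
    {E : Set X} (hE : IsClosed E) (hEne : E ≠ univ) {x : X} (hx : x ∈ E) :
    (connectedComponentIn E x ∩ closure Eᶜ).Nonempty := by
  by_contra hcon
  rw [Set.not_nonempty_iff_eq_empty] at hcon
  have hCint : connectedComponentIn E x ⊆ interior E := by
    intro y hy
    have : y ∉ closure Eᶜ := by
      intro hy2
      have hmem : y ∈ connectedComponentIn E x ∩ closure Eᶜ := ⟨hy, hy2⟩
      rw [hcon] at hmem
      exact hmem
    rw [closure_compl] at this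
    simpa using this
  haveI : CompactSpace E := isCompact_iff_compactSpace.mp hE.isCompact
  have himg := connectedComponentIn_eq_image hx
  -- the component in the subtype is contained in the preimage of the interior
  have hsub : connectedComponent (⟨x, hx⟩ : E) ⊆ (Subtype.val) ⁻¹' (interior E) := by
    intro z hz
    have : (z : X) ∈ connectedComponentIn E x := by
      rw [himg]; exact ⟨z, hz, rfl⟩
    exact hCint this
  obtain ⟨Z, hZclopen, hxZ, hZsub⟩ := clopen_sandwich (⟨x, hx⟩ : E)
    (isOpen_interior.preimage continuous_subtype_val) hsub
  -- F := val '' Z is clopen in X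
  set F : Set X := Subtype.val '' Z with hF
  have hFclosed : IsClosed F :=
    ((hZclopen.1.isCompact).image continuous_subtype_val).isClosed
  have hFopen : IsOpen F := by
    obtain ⟨O, hO, hOZ⟩ := isOpen_induced_iff.mp hZclopen.2
    have : F = O ∩ interior E := by
      apply Subset.antisymm
      · rintro y ⟨z, hz, rfl⟩
        exact ⟨by rw [← hOZ] at hz; exact hz, hZsub hz⟩
      · rintro y ⟨hyO, hyE⟩
        exact ⟨⟨y, interior_subset hyE⟩, by rw [← hOZ]; exact hyO, rfl⟩
    rw [this]
    exact hO.inter isOpen_interior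
  have := (isClopen_iff.mp ⟨hFclosed, hFopen⟩)
  rcases this with h | h
  · exact absurd h (Set.nonempty_iff_ne_empty.mp ⟨x, ⟨x, hx⟩, hxZ, rfl⟩)
  · apply hEne
    apply Subset.antisymm (subset_univ _)
    rw [← h]
    rintro y ⟨z, _, rfl⟩
    exact z.2

/-- Uniform version of the Kelley property for a fixed subcontinuum. -/
lemma kelley_uniform {X : Type*} [MetricSpace X] [CompactSpace X] (hkel : KelleyProp X)
    {C : Set X} (hC : IsSubcontinuum C) {ε : ℝ} (hε : 0 < ε) :
    ∃ δ > 0, ∀ y : X, infDist y C < δ →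
      ∃ B : Set X, IsSubcontinuum B ∧ y ∈ B ∧ hausdorffDist B C < ε := by
  by_contra hcon
  have hsel : ∀ n : ℕ, ∃ y : X, infDist y C < 1 / (n + 1) ∧
      ∀ B : Set X, IsSubcontinuum B → y ∈ B → ε ≤ hausdorffDist B C := by
    intro n
    by_contra hno
    push_neg at hno
    refine hcon ⟨1 / (n + 1), by positivity, fun y hy => ?_⟩
    obtain ⟨B, h1, h2, h3⟩ := hno y hy
    exact ⟨B, h1, h2, h3⟩
  choose y hy1 hy2 using hsel
  obtain ⟨y₀, -, φ, hφ, hconv⟩ := isCompact_univ.tendsto_subseq (fun n => mem_univ (y n))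
  have h0 : Tendsto (fun n => infDist (y (φ n)) C) atTop (𝓝 (infDist y₀ C)) :=
    ((continuous_infDist_pt C).tendsto y₀).comp hconv
  have hle : infDist y₀ C ≤ 0 := by
    refine le_of_tendsto_of_tendsto' h0 tendsto_one_div_add_atTop_nhds_zero_nat fun n => ?_
    refine le_trans (hy1 (φ n)).le ?_
    have hle' : n ≤ φ n := hφ.le_apply
    have hφn : (n : ℝ) + 1 ≤ (φ n : ℝ) + 1 := by exact_mod_cast Nat.succ_le_succ hle'
    exact one_div_le_one_div_of_le (by positivity) hφn
  have hy₀ : y₀ ∈ C := by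
    rw [hC.1.isClosed.mem_iff_infDist_zero hC.2.nonempty]
    exact le_antisymm hle infDist_nonneg
  obtain ⟨B, hB, hBtend⟩ := hkel (y ∘ φ) y₀ hconv C hC hy₀
  obtain ⟨n, hn⟩ := (hBtend.eventually_lt_const hε).exists
  exact absurd hn (not_lt.mpr (hy2 (φ n) (B n) (hB n).1 (hB n).2))

/-- In a compact space, the Hausdorff edistance between nonempty sets is finite. -/
lemma hEdist_ne_top {X : Type*} [MetricSpace X] [CompactSpace X]
    {s t : Set X} (hs : s.Nonempty) (ht : t.Nonempty) :
    EMetric.hausdorffEdist s t ≠ ⊤ :=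
  Metric.hausdorffEdist_ne_top_of_nonempty_of_bounded hs ht
    ((isCompact_univ.isBounded).subset (subset_univ _))
    ((isCompact_univ.isBounded).subset (subset_univ _))

/-- Inflation: in a Kelley continuum, a subcontinuum with nonempty interior is contained in
the interior of a subcontinuum staying within any given distance. -/
lemma inflate {X : Type*} [MetricSpace X] [CompactSpace X] (hkel : KelleyProp X)
    {C : Set X} (hC : IsSubcontinuum C) (hint : (interior C).Nonempty)
    {ε : ℝ} (hε : 0 < ε) :
    ∃ K : Set X, IsSubcontinuum K ∧ C ⊆ interior K ∧ K ⊆ {x | infDist x C ≤ ε} := by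
  obtain ⟨u, hu⟩ := hint
  obtain ⟨r, hr, hball⟩ := Metric.isOpen_iff.mp isOpen_interior u hu
  have hu' : u ∈ C := interior_subset hu
  set ε₀ : ℝ := min ε r / 2 with hε₀def
  have hε₀ : 0 < ε₀ := by
    have := lt_min hε hr
    positivity
  obtain ⟨δ, hδ, hBall⟩ := kelley_uniform hkel hC hε₀
  classical
  choose! B hB1 hB2 hB3 using hBall
  set T : Set X := {y : X | infDist y C < δ} with hT
  set S : Set X := C ∪ ⋃ y ∈ T, B y with hS
  have hTopen : IsOpen T := isOpen_lt (continuous_infDist_pt C) continuous_const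
  have hCT : C ⊆ T := fun y hy => by
    simp only [hT, mem_setOf_eq, infDist_zero_of_mem hy]; exact hδ
  have hTS : T ⊆ S := fun y hy => Or.inr (mem_biUnion hy (hB2 y hy))
  have hmeet : ∀ y ∈ T, (B y ∩ C).Nonempty := by
    intro y hy
    have hBne : (B y).Nonempty := (hB1 y hy).2.nonempty
    have hfin : EMetric.hausdorffEdist C (B y) ≠ ⊤ := hEdist_ne_top hC.2.nonempty hBne
    have h1 : infDist u (B y) ≤ hausdorffDist C (B y) :=
      infDist_le_hausdorffDist_of_mem hu' hfin
    have h2 : hausdorffDist C (B y) < ε₀ := by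
      rw [hausdorffDist_comm]; exact hB3 y hy
    have h3 : infDist u (B y) < r := by
      have hmr : min ε r ≤ r := min_le_right _ _
      have h4 : 0 < min ε r := lt_min hε hr
      nlinarith
    obtain ⟨b, hbB, hbd⟩ := (infDist_lt_iff hBne).mp h3
    refine ⟨b, hbB, interior_subset (hball ?_)⟩
    rw [mem_ball, dist_comm]
    exact hbd
  have hSconn : IsPreconnected S := by
    apply isPreconnected_of_forall u
    intro y hy
    rcases hy with hy | hy
    · exact ⟨C, subset_union_left, hu', hy, hC.2.isPreconnected⟩
    · obtain ⟨z, hz, hyz⟩ := by simpa using hy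
      refine ⟨B z ∪ C, union_subset (fun w hw => Or.inr (mem_biUnion hz hw))
        subset_union_left, Or.inr hu', Or.inl hyz, ?_⟩
      exact IsPreconnected.union' (hmeet z hz) (hB1 z hz).2.isPreconnected
        hC.2.isPreconnected
  refine ⟨closure S, ⟨isClosed_closure.isCompact, ⟨⟨u, subset_closure (Or.inl hu')⟩,
    hSconn.closure⟩⟩, ?_, ?_⟩
  · exact fun y hy => interior_maximal (hTS.trans subset_closure) hTopen (hCT hy)
  · apply closure_minimal _ (isClosed_le (continuous_infDist_pt C) continuous_const)
    rintro w (hw | hw)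
    · simp [infDist_zero_of_mem hw, hε.le]
    · obtain ⟨z, hz, hwz⟩ := by simpa using hw
      have hfin : EMetric.hausdorffEdist (B z) C ≠ ⊤ :=
        hEdist_ne_top (hB1 z hz).2.nonempty hC.2.nonempty
      have h1 : infDist w C ≤ hausdorffDist (B z) C :=
        infDist_le_hausdorffDist_of_mem hwz hfin
      have h2 : ε₀ ≤ ε := by
        have := min_le_left ε r
        nlinarith [lt_min hε hr]
      exact le_trans h1 (le_trans (hB3 z hz).le h2)

/-- Growing step: a proper subcontinuum with nonempty interior can be enlarged to a proper
subcontinuum containing it in its interior and meeting a prescribed nonempty open set. -/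
lemma grow {X : Type*} [MetricSpace X] [CompactSpace X] [ConnectedSpace X]
    (hkel : KelleyProp X) {K : Set X} (hK : IsSubcontinuum K)
    (hKint : (interior K).Nonempty) (hKprop : K ≠ univ)
    {U : Set X} (hU : IsOpen U) (hUne : U.Nonempty) :
    ∃ K' : Set X, IsSubcontinuum K' ∧ K ⊆ interior K' ∧ K' ≠ univ ∧ (K' ∩ U).Nonempty := by
  -- First find a subcontinuum C ⊇ K, C proper, touching the closure of U.
  have main : ∀ C : Set X, IsSubcontinuum C → K ⊆ C → C ≠ univ →
      ∀ z, z ∈ C ∩ closure U →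
      ∃ K' : Set X, IsSubcontinuum K' ∧ K ⊆ interior K' ∧ K' ≠ univ ∧ (K' ∩ U).Nonempty := by
    intro C hC hKC hCprop z hz
    obtain ⟨q, hq⟩ : ∃ q, q ∉ C := by
      by_contra h
      push_neg at h
      exact hCprop (eq_univ_of_forall h)
    have hqpos : 0 < infDist q C := by
      rcases lt_or_eq_of_le (infDist_nonneg (x := q) (s := C)) with h | h
      · exact h
      · exact absurd ((hC.1.isClosed.mem_iff_infDist_zero hC.2.nonempty).mpr h.symm) hq
    have hCint : (interior C).Nonempty := hKint.mono (interior_mono hKC)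
    obtain ⟨K', hK', hCK', hK'd⟩ := inflate hkel hC hCint (half_pos hqpos)
    refine ⟨K', hK', hKC.trans hCK', ?_, ?_⟩
    · intro h
      have : q ∈ K' := h ▸ mem_univ q
      have := hK'd this
      simp only [mem_setOf_eq] at this
      linarith
    · have hzint : z ∈ interior K' := hCK' hz.1
      obtain ⟨w, hw⟩ := mem_closure_iff.mp hz.2 _ isOpen_interior hzint
      exact ⟨w, interior_subset hw.1, hw.2⟩
  by_cases hKU : (K ∩ U).Nonempty
  · obtain ⟨z, hz⟩ := hKU
    exact main K hK subset_rfl hKprop z ⟨hz.1, subset_closure hz.2⟩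
  · -- K misses U; take the connected component of K in Uᶜ and bump the boundary.
    obtain ⟨x₀, hx₀⟩ := hK.2.nonempty
    have hx₀E : x₀ ∈ Uᶜ := fun h => hKU ⟨x₀, hx₀, h⟩
    have hEclosed : IsClosed (Uᶜ : Set X) := hU.isClosed_compl
    have hEprop : (Uᶜ : Set X) ≠ univ := by
      obtain ⟨p, hp⟩ := hUne
      intro h
      exact (h ▸ mem_univ p : p ∈ (Uᶜ : Set X)) hp
    set C : Set X := connectedComponentIn Uᶜ x₀ with hCdef
    have hKC : K ⊆ C := hK.2.isPreconnected.subset_connectedComponentIn hx₀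
      (fun y hy h => hKU ⟨y, hy, h⟩)
    have hCcompact : IsCompact C := by
      haveI : CompactSpace (Uᶜ : Set X) := isCompact_iff_compactSpace.mp hEclosed.isCompact
      rw [hCdef, connectedComponentIn_eq_image hx₀E]
      exact (isClosed_connectedComponent.isCompact).image continuous_subtype_val
    have hCconn : IsConnected C :=
      ⟨⟨x₀, mem_connectedComponentIn hx₀E⟩, isPreconnected_connectedComponentIn⟩
    have hCprop : C ≠ univ := by
      intro h
      obtain ⟨p, hp⟩ := hUne
      have hpC : p ∈ C := by rw [h]; exact mem_univ p
      exact (connectedComponentIn_subset Uᶜ x₀ hpC) hp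
    obtain ⟨z, hz⟩ := bump hEclosed hEprop hx₀E
    rw [compl_compl] at hz
    exact main C ⟨hCcompact, hCconn⟩ hKC hCprop z hz

theorem stmt_1 {X : Type*} [MetricSpace X] [CompactSpace X] [ConnectedSpace X] [Nonempty X]
    (hdec : Decomposable X) (hkel : KelleyProp X)
    (L : Set X) (hL : IsSubcontinuum L) (hLproper : L ≠ univ) :
    ∃ A ∈ NB X, (A : Set X) ⊆ Lᶜ := by
  classical
  obtain ⟨M, N, hM, hN, hMp, hNp, hMN⟩ := hdec
  -- Step 1: find a proper subcontinuum W ⊇ L with nonempty interior.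
  have hNc : (Nᶜ : Set X) ⊆ M := by
    intro x hx
    rcases (hMN ▸ mem_univ x : x ∈ M ∪ N) with h | h
    · exact h
    · exact absurd h hx
  have hMc : (Mᶜ : Set X) ⊆ N := by
    intro x hx
    rcases (hMN ▸ mem_univ x : x ∈ M ∪ N) with h | h
    · exact absurd h hx
    · exact h
  have hNcne : (Nᶜ : Set X).Nonempty := nonempty_compl.mpr hNp
  have hMcne : (Mᶜ : Set X).Nonempty := nonempty_compl.mpr hMp
  have hW : ∃ W : Set X, IsSubcontinuum W ∧ L ⊆ W ∧ W ≠ univ ∧ (interior W).Nonempty := by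
    by_cases hLM : (L ∩ M).Nonempty
    · by_cases hun : L ∪ M = univ
      · refine ⟨L, hL, subset_rfl, hLproper, hMcne.mono ?_⟩
        refine interior_maximal ?_ hM.1.isClosed.isOpen_compl
        intro x hx
        rcases (hun ▸ mem_univ x : x ∈ L ∪ M) with h | h
        · exact h
        · exact absurd h hx
      · refine ⟨L ∪ M, ⟨hL.1.union hM.1, IsConnected.union hLM hL.2 hM.2⟩,
          subset_union_left, hun, hNcne.mono ?_⟩
        exact interior_maximal (hNc.trans subset_union_right) hN.1.isClosed.isOpen_compl
    · have hLN : L ⊆ N := by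
        intro x hx
        rcases (hMN ▸ mem_univ x : x ∈ M ∪ N) with h | h
        · exact absurd ⟨hx, h⟩ (fun h' => hLM ⟨x, h'⟩)
        · exact h
      by_cases hun : L ∪ N = univ
      · exfalso
        obtain ⟨p, hp⟩ := hNcne
        rcases (hun ▸ mem_univ p : p ∈ L ∪ N) with h | h
        · exact hp (hLN h)
        · exact hp h
      · obtain ⟨x, hx⟩ := hL.2.nonempty
        refine ⟨L ∪ N, ⟨hL.1.union hN.1, IsConnected.union ⟨x, hx, hLN hx⟩ hL.2 hN.2⟩,
          subset_union_left, hun, hMcne.mono ?_⟩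
        exact interior_maximal (hMc.trans subset_union_right) hM.1.isClosed.isOpen_compl
  obtain ⟨W, hWc, hLW, hWp, hWint⟩ := hW
  -- Step 2: countable basis
  obtain ⟨b, hbcount, hbne', hbbasis⟩ := exists_countable_basis X
  have hbne : b.Nonempty := by
    obtain ⟨x⟩ := ‹Nonempty X›
    obtain ⟨u, hub, -, -⟩ := hbbasis.exists_subset_of_mem_open (mem_univ x) isOpen_univ
    exact ⟨u, hub⟩
  obtain ⟨e, he⟩ := hbcount.exists_eq_range hbne
  have heopen : ∀ n, IsOpen (e n) := fun n => hbbasis.isOpen (by rw [he]; exact mem_range_self n)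
  set f : ℕ → Set X := fun n => if (e n).Nonempty then e n else univ with hf
  have hfopen : ∀ n, IsOpen (f n) := by
    intro n
    by_cases h : (e n).Nonempty
    · simpa [hf, h] using heopen n
    · simp [hf, h]
  have hfne : ∀ n, (f n).Nonempty := by
    intro n
    by_cases h : (e n).Nonempty
    · simpa [hf, h] using h
    · simp [hf, h]
  -- Step 3: the increasing sequence of proper subcontinua
  set P : Set X → Prop := fun K => IsSubcontinuum K ∧ W ⊆ K ∧ K ≠ univ with hP
  have hP0 : P W := ⟨hWc, subset_rfl, hWp⟩
  have hPint : ∀ K, P K → (interior K).Nonempty :=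
    fun K hK => hWint.mono (interior_mono hK.2.1)
  have step : ∀ n : ℕ, ∀ Kp : {K : Set X // P K},
      ∃ K' : Set X, P K' ∧ Kp.1 ⊆ interior K' ∧ (K' ∩ f n).Nonempty := by
    intro n Kp
    obtain ⟨K', hK', hsub, hprop, hmeet⟩ :=
      grow hkel Kp.2.1 (hPint Kp.1 Kp.2) Kp.2.2.2 (hfopen n) (hfne n)
    exact ⟨K', ⟨hK', Kp.2.2.1.trans (hsub.trans interior_subset), hprop⟩, hsub, hmeet⟩
  choose step1 hstep1 hstep2 hstep3 using step
  set g : ℕ → {K : Set X // P K} := fun n =>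
    Nat.rec ⟨W, hP0⟩ (fun n ih => ⟨step1 n ih, hstep1 n ih⟩) n with hg
  set K : ℕ → Set X := fun n => (g n).1 with hKdef
  have hK0 : K 0 = W := rfl
  have hKP : ∀ n, P (K n) := fun n => (g n).2
  have hKsucc : ∀ n, K n ⊆ interior (K (n + 1)) := fun n => hstep2 n (g n)
  have hKmeet : ∀ n, (K (n + 1) ∩ f n).Nonempty := fun n => hstep3 n (g n)
  have hKmono : Monotone K :=
    monotone_nat_of_le_succ fun n => (hKsucc n).trans interior_subset
  -- Step 4: the open set G and its complement A
  set G : Set X := ⋃ n, K n with hG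
  have hGopen : IsOpen G := by
    have : G = ⋃ n, interior (K (n + 1)) := by
      apply Subset.antisymm
      · intro x hx
        obtain ⟨n, hn⟩ := mem_iUnion.mp hx
        exact mem_iUnion.mpr ⟨n, hKsucc n hn⟩
      · intro x hx
        obtain ⟨n, hn⟩ := mem_iUnion.mp hx
        exact mem_iUnion.mpr ⟨n + 1, interior_subset hn⟩
    rw [this]
    exact isOpen_iUnion fun n => isOpen_interior
  have hKG : ∀ n, K n ⊆ G := fun n => subset_iUnion K n
  have hWG : W ⊆ G := hK0 ▸ hKG 0
  -- A := Gᶜ is nonempty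
  have hGne : (Gᶜ : Set X).Nonempty := by
    have hnon : (⋂ n, closure ((K n)ᶜ)).Nonempty := by
      apply IsCompact.nonempty_iInter_of_sequence_nonempty_isCompact_isClosed
      · exact fun n => closure_mono (compl_subset_compl.mpr (hKmono (Nat.le_succ n)))
      · exact fun n => (nonempty_compl.mpr (hKP n).2.2).mono subset_closure
      · exact isClosed_closure.isCompact
      · exact fun n => isClosed_closure
    obtain ⟨z, hz⟩ := hnon
    refine ⟨z, fun hzG => ?_⟩
    obtain ⟨n, hn⟩ := mem_iUnion.mp hzG
    have h1 : z ∈ closure ((K (n + 1))ᶜ) := mem_iInter.mp hz (n + 1)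
    rw [closure_compl] at h1
    exact h1 (hKsucc n hn)
  have hGcompl_compact : IsCompact (Gᶜ : Set X) := hGopen.isClosed_compl.isCompact
  -- Step 5: density of G
  have hGdense : Dense G := by
    rw [hbbasis.dense_iff]
    intro o hob hone
    obtain ⟨n, hn⟩ : ∃ n, e n = o := by
      rw [he] at hob
      obtain ⟨n, hn⟩ := hob
      exact ⟨n, hn⟩
    have hfn : f n = o := by
      rw [hf]
      simp only [hn]
      rw [if_pos hone]
    obtain ⟨w, hw1, hw2⟩ := hKmeet n
    exact ⟨w, hfn ▸ hw2, hKG (n + 1) hw1⟩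
  -- Conclusion
  refine ⟨⟨⟨Gᶜ, hGcompl_compact⟩, hGne⟩, ?_, ?_⟩
  · intro x hx
    have hxG : x ∈ G := by simpa using hx
    have hsub : G ⊆ kappa (Gᶜ : Set X) ({x} : Set X) := by
      intro y hy
      obtain ⟨n, hn⟩ := mem_iUnion.mp hy
      obtain ⟨m, hm⟩ := mem_iUnion.mp hxG
      refine mem_sUnion.mpr ⟨K (max n m), ⟨(hKP _).1, ⟨x, hKmono (le_max_right n m) hm, rfl⟩,
        ?_⟩, hKmono (le_max_left n m) hn⟩
      rw [compl_compl]
      exact hKG (max n m)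
    exact hGdense.mono hsub
  · intro x hx
    have hxG : x ∈ (Gᶜ : Set X) := by simpa using hx
    exact fun hxL => hxG (hWG (hLW hxL))
end

section
/- Let X be a continuum, x ∈ X, and let B(x) = {y ∈ X : the closure of the union of all subcontinua of X containing y and avoiding x is not all of X}. If L is a subcontinuum of X meeting both B(x) and X \ B(x), then x ∈ L. -/
open Set Metric Filter Topology TopologicalSpace

theorem stmt_3 {X : Type*} [MetricSpace X] [CompactSpace X] [ConnectedSpace X] [Nonempty X]
    (x : X) (L : Set X) (hL : IsSubcontinuum L)
    (h1 : (L ∩ {y | ¬ Dense (kappa ({x} : Set X) ({y} : Set X))}).Nonempty)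
    (h2 : (L ∩ {y | ¬ Dense (kappa ({x} : Set X) ({y} : Set X))}ᶜ).Nonempty) :
    x ∈ L := by
  by_contra hx
  obtain ⟨z, hzL, hz⟩ := h1
  obtain ⟨y, hyL, hy⟩ := h2
  simp only [mem_compl_iff, mem_setOf_eq, not_not] at hy
  apply hz
  refine hy.mono ?_
  rintro p ⟨K, ⟨hKsub, ⟨w, hwK, hwy⟩, hKx⟩, hpK⟩
  rw [mem_singleton_iff] at hwy
  subst hwy
  have hLx : L ⊆ ({x} : Set X)ᶜ := by
    intro a ha h
    rw [mem_singleton_iff] at h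
    exact hx (h ▸ ha)
  exact ⟨K ∪ L, ⟨⟨hKsub.1.union hL.1,
    hKsub.2.union ⟨w, hwK, hyL⟩ hL.2⟩, ⟨z, Or.inr hzL, rfl⟩,
    union_subset hKx hLx⟩, Or.inl hpK⟩
end

section
/- Let X be a decomposable continuum with the property of Kelley, let A be a subcontinuum of X, and let x, y ∈ X \ A with κ_{X\A}(x) ∩ κ_{X\A}(y) = ∅. If κ_{X\A}(x) meets the closure of κ_{X\A}(y), then κ_{X\A}(x) ⊆ Cl(κ_{X\A}(y)). -/
open Set Metric Filter Topology TopologicalSpace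

theorem stmt_9 {X : Type*} [MetricSpace X] [CompactSpace X] [ConnectedSpace X] [Nonempty X]
    (hdec : Decomposable X) (hkel : KelleyProp X)
    (A : Set X) (hA : IsSubcontinuum A) (x y : X) (hx : x ∈ Aᶜ) (hy : y ∈ Aᶜ)
    (hdisj : kappa A ({x} : Set X) ∩ kappa A ({y} : Set X) = ∅)
    (hmeet : (kappa A ({x} : Set X) ∩ closure (kappa A ({y} : Set X))).Nonempty) :
    kappa A ({x} : Set X) ⊆ closure (kappa A ({y} : Set X)) := by
  intro q hq
  obtain ⟨p, hpx, hpcl⟩ := hmeet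
  obtain ⟨L, ⟨hLsub, hLx, hLA⟩, hpL⟩ := hpx
  obtain ⟨M, ⟨hMsub, hMx, hMA⟩, hqM⟩ := hq
  rw [Set.inter_singleton_nonempty] at hLx hMx
  set K : Set X := L ∪ M with hKdef
  have hKcomp : IsCompact K := hLsub.1.union hMsub.1
  have hKconn : IsConnected K := hLsub.2.union ⟨x, hLx, hMx⟩ hMsub.2
  have hKsub : IsSubcontinuum K := ⟨hKcomp, hKconn⟩
  have hKA : K ⊆ Aᶜ := Set.union_subset hLA hMA
  have hKne : K.Nonempty := hKconn.nonempty
  have hApos : ∀ z ∈ K, 0 < infDist z A := by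
    intro z hz
    rcases hA with ⟨hAc, hAconn⟩
    rw [← hAc.isClosed.notMem_iff_infDist_pos hAconn.nonempty]
    exact hKA hz
  -- minimum of infDist over K
  obtain ⟨z₀, hz₀K, hz₀min⟩ :=
    hKcomp.exists_isMinOn hKne ((continuous_infDist_pt A).continuousOn)
  set ε₀ : ℝ := infDist z₀ A with hε₀def
  have hε₀pos : 0 < ε₀ := hApos z₀ hz₀K
  -- sequence in kappa A {y} converging to p
  obtain ⟨yn, hyn, hylim⟩ := mem_closure_iff_seq_limit.mp hpcl
  have hpK : p ∈ K := Or.inl hpL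
  obtain ⟨B, hB, hBlim⟩ := hkel yn p hylim K hKsub hpK
  rw [Metric.mem_closure_iff]
  intro ε hε
  have hev : ∀ᶠ n in atTop, hausdorffDist (B n) K < min ε (ε₀ / 2) := by
    have := (Metric.tendsto_nhds.mp hBlim) (min ε (ε₀ / 2))
      (lt_min hε (by linarith))
    filter_upwards [this] with n hn
    calc hausdorffDist (B n) K ≤ |hausdorffDist (B n) K - 0| := by
          rw [sub_zero]; exact le_abs_self _
      _ = dist (hausdorffDist (B n) K) 0 := by rw [Real.dist_eq]
      _ < _ := hn
  obtain ⟨n, hn⟩ := hev.exists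
  have hBne : (B n).Nonempty := (hB n).1.2.nonempty
  have hBbdd : Bornology.IsBounded (B n) := (hB n).1.1.isBounded
  have hKbdd : Bornology.IsBounded K := hKcomp.isBounded
  have hne_top : EMetric.hausdorffEdist (B n) K ≠ ⊤ :=
    Metric.hausdorffEdist_ne_top_of_nonempty_of_bounded hBne hKne hBbdd hKbdd
  -- B n avoids A
  have hBA : B n ⊆ Aᶜ := by
    intro b hb
    have h1 : infDist b K ≤ hausdorffDist (B n) K :=
      Metric.infDist_le_hausdorffDist_of_mem hb hne_top
    have h2 : infDist b K < ε₀ / 2 := lt_of_le_of_lt h1 (lt_of_lt_of_le hn (min_le_right _ _))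
    obtain ⟨z, hzK, hzd⟩ := (Metric.infDist_lt_iff hKne).mp h2
    have h3 : infDist z A ≤ infDist b A + dist z b :=
      Metric.infDist_le_infDist_add_dist
    have h4 : ε₀ ≤ infDist z A := hz₀min hzK
    have h5 : 0 < infDist b A := by
      rw [dist_comm] at hzd
      linarith
    rcases hA with ⟨hAc, hAconn⟩
    rw [← hAc.isClosed.notMem_iff_infDist_pos hAconn.nonempty] at h5
    exact h5
  -- B n ⊆ kappa A {y}
  have hBsub : B n ⊆ kappa A ({y} : Set X) := by
    obtain ⟨C, ⟨hCsub, hCy, hCA⟩, hynC⟩ := hyn n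
    rw [Set.inter_singleton_nonempty] at hCy
    intro b hb
    refine ⟨B n ∪ C, ⟨⟨(hB n).1.1.union hCsub.1,
      (hB n).1.2.union ⟨yn n, (hB n).2, hynC⟩ hCsub.2⟩,
      ⟨y, Or.inr hCy, rfl⟩, Set.union_subset hBA hCA⟩, Or.inl hb⟩
  -- q is within ε of B n
  have hqK : q ∈ K := Or.inr hqM
  have h6 : infDist q (B n) ≤ hausdorffDist K (B n) :=
    Metric.infDist_le_hausdorffDist_of_mem hqK
      (by rwa [EMetric.hausdorffEdist_comm])
  rw [Metric.hausdorffDist_comm] at h6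
  have h7 : infDist q (B n) < ε := lt_of_le_of_lt h6 (lt_of_lt_of_le hn (min_le_left _ _))
  obtain ⟨b, hbB, hbd⟩ := (Metric.infDist_lt_iff hBne).mp h7
  exact ⟨b, hBsub hbB, hbd⟩
end

section
/- Let X be a continuum with the property of Kelley, let A be a nonempty closed subset of X, and let K be a subcontinuum of X \ A with nonempty interior. Then there exists a subcontinuum L of X with K ⊆ Int(L) ⊆ L ⊆ X \ A. -/
open Set Metric Filter Topology TopologicalSpace

theorem stmt_18 {X : Type*} [MetricSpace X] [CompactSpace X] [ConnectedSpace X] [Nonempty X]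
    (hkel : KelleyProp X) (A : Set X) (hA : IsClosed A) (hAne : A.Nonempty)
    (K : Set X) (hK : IsSubcontinuum K) (hKA : K ⊆ Aᶜ) (hint : (interior K).Nonempty) :
    ∃ L : Set X, IsSubcontinuum L ∧ K ⊆ interior L ∧ L ⊆ Aᶜ := by

  -- `p` is an interior point of `K` with a ball of radius `r` inside `K`.
  obtain ⟨p, hp⟩ := hint
  obtain ⟨r, hr, hball⟩ := Metric.isOpen_iff.1 isOpen_interior p hp
  have hpK : p ∈ K := interior_subset hp
  have hKne : K.Nonempty := ⟨p, hpK⟩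
  -- `ε` : cthickening of `K` stays in `Aᶜ`.
  obtain ⟨ε, hε, hεA⟩ := hK.1.exists_cthickening_subset_open hA.isOpen_compl hKA
  set ε' : ℝ := min ε r with hε'def
  have hε' : 0 < ε' := lt_min hε hr
  -- Step: find δ > 0 such that every point δ-close to K lies in a subcontinuum
  -- ε'-Hausdorff-close to K.
  have key : ∃ δ > 0, ∀ y : X, infDist y K < δ →
      ∃ B : Set X, IsSubcontinuum B ∧ y ∈ B ∧ hausdorffDist B K < ε' := by
    by_contra hcon
    push_neg at hcon
    have hy : ∀ n : ℕ, ∃ y : X, infDist y K < 1 / (n + 1) ∧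
        ∀ B : Set X, IsSubcontinuum B → y ∈ B → ε' ≤ hausdorffDist B K := by
      intro n
      exact hcon (1 / (n + 1)) (by positivity)
    choose y hy1 hy2 using hy
    have hk : ∀ n : ℕ, ∃ k ∈ K, dist (y n) k < 1 / (n + 1) := fun n =>
      (Metric.infDist_lt_iff hKne).1 (hy1 n)
    choose k hkK hkd using hk
    obtain ⟨x, hxK, φ, hφ, hkx⟩ := hK.1.tendsto_subseq hkK
    have hyx : Tendsto (fun n => y (φ n)) atTop (𝓝 x) := by
      rw [tendsto_iff_dist_tendsto_zero]
      apply squeeze_zero (f := fun n : ℕ => dist (y (φ n)) x)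
        (g := fun n : ℕ => 1 / (n + 1 : ℝ) + dist (k (φ n)) x) (fun n => dist_nonneg)
      · intro n
        calc dist (y (φ n)) x ≤ dist (y (φ n)) (k (φ n)) + dist (k (φ n)) x :=
              dist_triangle _ _ _
          _ ≤ 1 / (n + 1 : ℝ) + dist (k (φ n)) x := by
              have h1 : dist (y (φ n)) (k (φ n)) < 1 / (φ n + 1 : ℝ) := hkd (φ n)
              have h2 : (1 : ℝ) / (φ n + 1) ≤ 1 / (n + 1) := by
                apply one_div_le_one_div_of_le (by positivity)
                have h3 : (n : ℝ) ≤ φ n := Nat.cast_le.2 hφ.le_apply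
                linarith
              linarith
      · have h1 : Tendsto (fun n : ℕ => 1 / (n + 1 : ℝ)) atTop (𝓝 0) :=
          tendsto_one_div_add_atTop_nhds_zero_nat
        have h2 : Tendsto (fun n => dist (k (φ n)) x) atTop (𝓝 0) := by
          rw [← tendsto_iff_dist_tendsto_zero]; exact hkx
        simpa using h1.add h2
    obtain ⟨B, hB1, hB2⟩ := hkel (fun n => y (φ n)) x hyx K hK hxK
    have := (hB2.eventually_lt_const hε').exists
    obtain ⟨n, hn⟩ := this
    exact absurd hn (not_lt.2 (hy2 (φ n) (B n) (hB1 n).1 (hB1 n).2))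
  obtain ⟨δ, hδ, hδp⟩ := key
  -- choose subcontinua for points in the δ-thickening
  have hch : ∀ y : X, ∃ B : Set X, IsSubcontinuum B ∧
      (y ∈ thickening δ K → y ∈ B) ∧ hausdorffDist B K < ε' := by
    intro y
    by_cases hy : y ∈ thickening δ K
    · obtain ⟨B, h1, h2, h3⟩ := hδp y ((mem_thickening_iff_infDist_lt hKne).1 hy)
      exact ⟨B, h1, fun _ => h2, h3⟩
    · exact ⟨K, hK, fun h => absurd h hy, by
        simp [Metric.hausdorffDist_self_zero, hε']⟩
  choose g hg1 hg2 hg3 using hch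
  have hedist : ∀ y : X, EMetric.hausdorffEdist (g y) K ≠ ⊤ := fun y =>
    Metric.hausdorffEdist_ne_top_of_nonempty_of_bounded (hg1 y).2.nonempty hKne
      (Metric.isBounded_of_compactSpace) (Metric.isBounded_of_compactSpace)
  -- each g y meets K (through the ball around p)
  have hmeet : ∀ y : X, (K ∩ g y).Nonempty := by
    intro y
    obtain ⟨b, hb, hbd⟩ := Metric.exists_dist_lt_of_hausdorffDist_lt (s := K) hpK
      (by rw [hausdorffDist_comm]; exact hg3 y) (by rw [EMetric.hausdorffEdist_comm]; exact hedist y)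
    exact ⟨b, interior_subset (hball (by
      simpa [mem_ball, dist_comm] using hbd.trans_le (min_le_right ε r))), hb⟩
  set S : Set X := ⋃ y : X, (K ∪ g y) with hS
  have hSconn : IsPreconnected S := by
    exact isPreconnected_iUnion ⟨p, mem_iInter.2 fun y => Or.inl hpK⟩
      (fun y => ((hK.2.union (hmeet y) (hg1 y).2)).isPreconnected)
  have hSsub : S ⊆ cthickening ε K := by
    rintro z hz
    simp only [hS, mem_iUnion, mem_union] at hz
    obtain ⟨y, hz | hz⟩ := hz
    · exact self_subset_cthickening _ hz
    · have h1 : infDist z K ≤ hausdorffDist (g y) K :=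
        Metric.infDist_le_hausdorffDist_of_mem hz (hedist y)
      have h2 : infDist z K ≤ ε := le_of_lt (h1.trans_lt ((hg3 y).trans_le (min_le_left ε r)))
      obtain ⟨w, hwK, hwd⟩ := hK.1.exists_infDist_eq_dist hKne z
      exact mem_cthickening_of_dist_le z w ε K hwK (by rw [← hwd]; exact h2)
  have hTS : thickening δ K ⊆ S := by
    intro z hz
    exact mem_iUnion.2 ⟨z, Or.inr (hg2 z hz)⟩
  refine ⟨closure S, ⟨IsClosed.isCompact isClosed_closure, ?_, hSconn.closure⟩, ?_, ?_⟩
  · exact ⟨p, subset_closure (mem_iUnion.2 ⟨p, Or.inl hpK⟩)⟩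
  · calc K ⊆ thickening δ K := self_subset_thickening hδ K
      _ ⊆ interior (closure S) :=
        interior_maximal (hTS.trans subset_closure) isOpen_thickening
  · calc closure S ⊆ cthickening ε K :=
        closure_minimal hSsub (isClosed_cthickening)
      _ ⊆ Aᶜ := hεA
end
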